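/- Let 𝔖 : V → End(V) be given in coordinates by cubic homogeneous polynomials in x, with each 𝔖(x) self-adjoint, 𝔖(x)x = 0, and suppose 𝔖(x) = 0 whenever (x,x) = 0, where dim V ≥ 3 and the form is indefinite of signature (p,q) with p,q ≥ 1. Then 𝔖(x) = 0 for all x ∈ V. -/

import Mathlib

open MvPolynomial Polynomial

noncomputable section Aux

variable (p q' : ℕ)

/-- the quadratic form polynomial -/
def qpoly (p q : ℕ) : MvPolynomial (Fin p ⊕ Fin q) ℝ :=
  (∑ i : Fin q, X (Sum.inr i) ^ 2) - ∑ j : Fin p, X (Sum.inl j) ^ 2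

lemma eval_qpoly (p q : ℕ) (x : Fin p ⊕ Fin q → ℝ) :
    MvPolynomial.eval x (qpoly p q) =
      ∑ i : Fin q, x (Sum.inr i) ^ 2 - ∑ j : Fin p, x (Sum.inl j) ^ 2 := by
  simp [qpoly]

lemma qpoly_isHomogeneous (p q : ℕ) : (qpoly p q).IsHomogeneous 2 := by
  apply MvPolynomial.IsHomogeneous.sub
  · exact MvPolynomial.IsHomogeneous.sum _ _ _ (fun i _ => MvPolynomial.isHomogeneous_X_pow _ 2)
  · exact MvPolynomial.IsHomogeneous.sum _ _ _ (fun i _ => MvPolynomial.isHomogeneous_X_pow _ 2)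

/-- split off the variable `inr 0` -/
def splitEquiv : (Fin p ⊕ Fin (q' + 1)) ≃ Option (Fin p ⊕ Fin q') where
  toFun := Sum.elim (fun j => some (Sum.inl j))
    (fun i => Fin.cases none (fun i' => some (Sum.inr i')) i)
  invFun := fun o => o.elim (Sum.inr 0) (Sum.elim Sum.inl (fun i => Sum.inr i.succ))
  left_inv := by
    rintro (j | i)
    · rfl
    · induction i using Fin.cases <;> rfl
  right_inv := by
    rintro (_ | (j | i)) <;> rfl

@[simp] lemma splitEquiv_inl (j : Fin p) : splitEquiv p q' (Sum.inl j) = some (Sum.inl j) := rfl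
@[simp] lemma splitEquiv_inr_zero : splitEquiv p q' (Sum.inr 0) = none := rfl
@[simp] lemma splitEquiv_inr_succ (i : Fin q') :
    splitEquiv p q' (Sum.inr i.succ) = some (Sum.inr i) := rfl

/-- the algebra equivalence singling out variable `inr 0` -/
def Φ : MvPolynomial (Fin p ⊕ Fin (q' + 1)) ℝ ≃ₐ[ℝ]
    Polynomial (MvPolynomial (Fin p ⊕ Fin q') ℝ) :=
  (renameEquiv ℝ (splitEquiv p q')).trans (optionEquivLeft ℝ (Fin p ⊕ Fin q'))

lemma Φ_X (k : Fin p ⊕ Fin (q' + 1)) :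
    Φ p q' (X k) = ((splitEquiv p q' k).elim Polynomial.X (fun m => Polynomial.C (X m))) := by
  cases h : splitEquiv p q' k <;>
    simp [Φ, renameEquiv_apply, rename_X, h, optionEquivLeft_X_none, optionEquivLeft_X_some]

/-- evaluation compatibility -/
lemma eval_Φ (F : MvPolynomial (Fin p ⊕ Fin (q' + 1)) ℝ) (s : ℝ) (y : Fin p ⊕ Fin q' → ℝ) :
    Polynomial.eval s (Polynomial.map (MvPolynomial.eval y) (Φ p q' F)) =
      MvPolynomial.eval (fun k => (splitEquiv p q' k).elim s y) F := by
  induction F using MvPolynomial.induction_on with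
  | C a => simp [Φ, optionEquivLeft_C]
  | add f g hf hg => simp [map_add, hf, hg]
  | mul_X f k hf =>
      rw [map_mul, Polynomial.map_mul, Polynomial.eval_mul, hf, map_mul, Φ_X]
      congr 1
      cases h : splitEquiv p q' k <;> simp [h]

/-- the "rest" quadratic -/
def crest : MvPolynomial (Fin p ⊕ Fin q') ℝ :=
  (∑ i : Fin q', X (Sum.inr i) ^ 2) - ∑ j : Fin p, X (Sum.inl j) ^ 2

lemma Φ_qpoly : Φ p q' (qpoly p (q' + 1)) =
    Polynomial.X ^ 2 + Polynomial.C (crest p q') := by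
  have h0 : Φ p q' (X (Sum.inr 0)) = Polynomial.X := by
    rw [Φ_X]; rfl
  have hs : ∀ i : Fin q', Φ p q' (X (Sum.inr i.succ)) = Polynomial.C (X (Sum.inr i)) := by
    intro i; rw [Φ_X]; rfl
  have hl : ∀ j : Fin p, Φ p q' (X (Sum.inl j)) = Polynomial.C (X (Sum.inl j)) := by
    intro j; rw [Φ_X]; rfl
  rw [qpoly, map_sub, map_sum, map_sum, Fin.sum_univ_succ]
  simp only [map_pow, h0, hs, hl]
  rw [crest, map_sub, map_sum, map_sum]
  simp only [map_pow]
  ring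

lemma monic_Φ_qpoly : (Polynomial.X ^ 2 + Polynomial.C (crest p q')).Monic := by
  exact Polynomial.monic_X_pow_add (Polynomial.degree_C_le.trans_lt (by decide))


/-- restriction of an mv polynomial to a line is a polynomial -/
lemma line_poly {σ : Type*} (G : MvPolynomial σ ℝ) (y δ : σ → ℝ) :
    ∃ pg : Polynomial ℝ, ∀ t : ℝ,
      pg.eval t = MvPolynomial.eval (fun k => y k + t * δ k) G := by
  refine ⟨MvPolynomial.aeval (fun k => Polynomial.C (y k) + Polynomial.C (δ k) * Polynomial.X) G,
    fun t => ?_⟩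
  induction G using MvPolynomial.induction_on with
  | C a => simp
  | add f g hf hg => simp [hf, hg]
  | mul_X f k hf =>
      simp [hf]
      left; ring

/-- a polynomial vanishing on a ray vanishes at 0 of the line -/
lemma eval_zero_of_ray {σ : Type*} (G : MvPolynomial σ ℝ) (y δ : σ → ℝ) (T : ℝ)
    (h : ∀ t : ℝ, T ≤ t → MvPolynomial.eval (fun k => y k + t * δ k) G = 0) :
    MvPolynomial.eval y G = 0 := by
  obtain ⟨pg, hpg⟩ := line_poly G y δ
  have : pg = 0 := by
    apply Polynomial.eq_zero_of_infinite_isRoot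
    apply Set.Infinite.mono _ (Set.Ici_infinite T)
    intro t ht
    simpa [Polynomial.IsRoot, hpg] using h t ht
  have h0 := hpg 0
  rw [this] at h0
  simp only [Polynomial.eval_zero] at h0
  rw [show y = (fun k => y k + (0:ℝ) * δ k) by funext k; ring]
  exact h0.symm

lemma crest_line (p q' : ℕ) (j0 : Fin p) (y : Fin p ⊕ Fin q' → ℝ) (t : ℝ) :
    MvPolynomial.eval (fun k => y k + t * (if k = Sum.inl j0 then 1 else 0)) (crest p q') =
      MvPolynomial.eval y (crest p q') - 2 * t * y (Sum.inl j0) - t ^ 2 := by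
  simp only [crest, map_sub, map_sum, map_pow, MvPolynomial.eval_X]
  have h1 : ∀ i : Fin q', (y (Sum.inr i) + t * (if (Sum.inr i : Fin p ⊕ Fin q') = Sum.inl j0 then (1:ℝ) else 0)) ^ 2
      = y (Sum.inr i) ^ 2 := by
    intro i; rw [if_neg (by simp)]; ring
  have h2 : ∀ j : Fin p, (y (Sum.inl j) + t * (if (Sum.inl j : Fin p ⊕ Fin q') = Sum.inl j0 then (1:ℝ) else 0)) ^ 2
      = y (Sum.inl j) ^ 2 + (if j = j0 then 2 * t * y (Sum.inl j0) + t ^ 2 else 0) := by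
    intro j
    by_cases h : j = j0
    · subst h; rw [if_pos rfl, if_pos rfl]; ring
    · rw [if_neg (fun hh => h (Sum.inl.inj hh)), if_neg h]; ring
  simp only [h1, h2, Finset.sum_add_distrib, Finset.sum_ite_eq', Finset.mem_univ, if_true]
  ring

lemma key_dvd (p q' : ℕ) (hp : 1 ≤ p) (F : MvPolynomial (Fin p ⊕ Fin (q' + 1)) ℝ)
    (hv : ∀ x, MvPolynomial.eval x (qpoly p (q' + 1)) = 0 → MvPolynomial.eval x F = 0) :
    qpoly p (q' + 1) ∣ F := by
  set qh : Polynomial (MvPolynomial (Fin p ⊕ Fin q') ℝ) :=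
    Polynomial.X ^ 2 + Polynomial.C (crest p q') with hqh
  have hmon : qh.Monic := monic_Φ_qpoly p q'
  have hdm : qh * (Φ p q' F /ₘ qh) + (Φ p q' F %ₘ qh) = Φ p q' F := by
    rw [add_comm]; exact Polynomial.modByMonic_add_div _ _
  set r := Φ p q' F %ₘ qh with hr
  have hq2 : qh.degree = 2 := by
    rw [hqh, Polynomial.degree_add_eq_left_of_degree_lt]
    · exact_mod_cast Polynomial.degree_X_pow 2
    · rw [Polynomial.degree_X_pow]
      exact Polynomial.degree_C_le.trans_lt (by decide)
  have hdeg : r.degree ≤ 1 := by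
    have h2 : r.degree < 2 := hq2 ▸ Polynomial.degree_modByMonic_lt (Φ p q' F) hmon
    refine (Polynomial.degree_le_iff_coeff_zero r 1).mpr ?_
    intro m hm
    apply Polynomial.coeff_eq_zero_of_degree_lt
    refine lt_of_lt_of_le h2 ?_
    have hm2 : 2 ≤ m := by
      have : (1:ℕ) < m := by exact_mod_cast hm
      omega
    exact_mod_cast Nat.cast_le.mpr hm2
  have hform : r = Polynomial.C (r.coeff 1) * Polynomial.X + Polynomial.C (r.coeff 0) :=
    Polynomial.eq_X_add_C_of_degree_le_one hdeg
  -- evaluation at null points kills the remainder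
  have hAB : ∀ (y : Fin p ⊕ Fin q' → ℝ) (s : ℝ), s ^ 2 + MvPolynomial.eval y (crest p q') = 0 →
      MvPolynomial.eval y (r.coeff 1) * s + MvPolynomial.eval y (r.coeff 0) = 0 := by
    intro y s hnull
    have h1 : MvPolynomial.eval (fun k => (splitEquiv p q' k).elim s y) (qpoly p (q' + 1)) = 0 := by
      rw [← eval_Φ, Φ_qpoly]
      simpa using hnull
    have h2 := hv _ h1
    rw [← eval_Φ, ← hdm] at h2
    rw [Polynomial.map_add, Polynomial.map_mul, Polynomial.eval_add, Polynomial.eval_mul] at h2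
    have h3 : Polynomial.eval s (Polynomial.map (MvPolynomial.eval y) qh) = 0 := by
      rw [hqh]; simpa using hnull
    rw [h3, zero_mul, zero_add] at h2
    rw [hform] at h2
    simpa using h2
  -- on the open region crest < 0 both coefficients vanish
  have hneg : ∀ (y : Fin p ⊕ Fin q' → ℝ), MvPolynomial.eval y (crest p q') < 0 →
      MvPolynomial.eval y (r.coeff 1) = 0 ∧ MvPolynomial.eval y (r.coeff 0) = 0 := by
    intro y hy
    set c := MvPolynomial.eval y (crest p q') with hc
    have hs : Real.sqrt (-c) ^ 2 = -c := Real.sq_sqrt (by linarith)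
    have hspos : 0 < Real.sqrt (-c) := Real.sqrt_pos.mpr (by linarith)
    have e1 := hAB y (Real.sqrt (-c)) (by rw [hs]; ring)
    have e2 := hAB y (-Real.sqrt (-c)) (by rw [neg_pow, hs]; ring)
    constructor
    · nlinarith [e1, e2]
    · nlinarith [e1, e2]
  -- hence everywhere
  have hcoeff : ∀ m : ℕ, m ≤ 1 → r.coeff m = 0 := by
    intro m _
    have : ∀ y : Fin p ⊕ Fin q' → ℝ, MvPolynomial.eval y (r.coeff m) = 0 := by
      intro y
      set j0 : Fin p := ⟨0, hp⟩
      set δ : Fin p ⊕ Fin q' → ℝ := fun k => if k = Sum.inl j0 then 1 else 0 with hδ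
      apply eval_zero_of_ray (r.coeff m) y δ
        (|MvPolynomial.eval y (crest p q')| + 2 * |y (Sum.inl j0)| + 1)
      intro t ht
      have hcy : MvPolynomial.eval (fun k => y k + t * δ k) (crest p q') < 0 := by
        rw [hδ, crest_line p q' j0 y t]
        have h1 := abs_nonneg (MvPolynomial.eval y (crest p q'))
        have h2 := abs_nonneg (y (Sum.inl j0))
        have h3 := le_abs_self (MvPolynomial.eval y (crest p q'))
        have h4 := neg_abs_le (y (Sum.inl j0))
        nlinarith
      rcases Nat.le_one_iff_eq_zero_or_eq_one.mp (by assumption) with h | h <;> rw [h]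
      · exact (hneg _ hcy).2
      · exact (hneg _ hcy).1
    have := MvPolynomial.funext (p := r.coeff m) (q := 0) (by simpa using this)
    simpa using this
  have hr0 : r = 0 := by
    rw [hform, hcoeff 1 le_rfl, hcoeff 0 (by norm_num)]
    simp
  rw [hr0, add_zero] at hdm
  refine ⟨(Φ p q').symm (Φ p q' F /ₘ qh), ?_⟩
  have : qpoly p (q' + 1) = (Φ p q').symm qh := by
    rw [hqh, ← Φ_qpoly]
    exact ((Φ p q').symm_apply_apply _).symm
  rw [this, ← map_mul, hdm]
  exact ((Φ p q').symm_apply_apply F).symm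

end Aux

section Lin
open MvPolynomial

lemma my_degree_single {σ : Type*} (k : σ) : (Finsupp.single k 1 : σ →₀ ℕ).degree = 1 := by
  classical
  simp [Finsupp.degree_apply, Finsupp.support_single_ne_zero k one_ne_zero]

lemma degree_one_single {σ : Type*} [DecidableEq σ] (d : σ →₀ ℕ) (hd : d.degree = 1) :
    ∃ k, d = Finsupp.single k 1 := by
  have hne : d ≠ 0 := by
    intro h; rw [h] at hd; simp at hd
  obtain ⟨k, hk⟩ := Finsupp.support_nonempty_iff.mpr hne
  refine ⟨k, ?_⟩
  have hk1 : 1 ≤ d k := Nat.one_le_iff_ne_zero.mpr (Finsupp.mem_support_iff.mp hk)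
  have hle : d k ≤ d.degree := Finsupp.le_degree k d
  ext a
  by_cases ha : a = k
  · subst ha; rw [Finsupp.single_eq_same]; omega
  · rw [Finsupp.single_eq_of_ne' (Ne.symm ha)]
    by_contra hda
    have h1 : 1 ≤ d a := Nat.one_le_iff_ne_zero.mpr hda
    have hasup : a ∈ d.support := Finsupp.mem_support_iff.mpr hda
    have hsub : ({a, k} : Finset σ) ⊆ d.support := by
      intro z hz
      rcases Finset.mem_insert.mp hz with h | h
      · subst h; exact hasup
      · rw [Finset.mem_singleton.mp h]; exact hk
    have hsum : d a + d k ≤ ∑ i ∈ d.support, d i := by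
      rw [← Finset.sum_pair ha]
      exact Finset.sum_le_sum_of_subset hsub
    have : d.degree = ∑ i ∈ d.support, d i := rfl
    omega

lemma homog_one_structure {σ : Type*} [Fintype σ] [DecidableEq σ] (L : MvPolynomial σ ℝ)
    (h : L.IsHomogeneous 1) :
    L = ∑ k : σ, MvPolynomial.C (MvPolynomial.coeff (Finsupp.single k 1) L) * X k := by
  apply MvPolynomial.ext
  intro d
  rw [MvPolynomial.coeff_sum]
  simp only [MvPolynomial.coeff_C_mul, MvPolynomial.coeff_X']
  by_cases hd : d.degree = 1
  · obtain ⟨k0, rfl⟩ := degree_one_single d hd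
    rw [Finset.sum_eq_single k0]
    · rw [if_pos rfl, mul_one]
    · intro k _ hk
      rw [if_neg, mul_zero]
      intro hkk
      exact hk ((Finsupp.single_left_injective one_ne_zero).eq_iff.mp hkk ▸ rfl)
    · intro hk0; exact absurd (Finset.mem_univ k0) hk0
  · rw [h.coeff_eq_zero hd]
    apply (Finset.sum_eq_zero ?_).symm
    intro k _
    rw [if_neg, mul_zero]
    intro hkk
    apply hd
    rw [← hkk, my_degree_single]

lemma eval_homog_one_add {σ : Type*} [Fintype σ] [DecidableEq σ] (L : MvPolynomial σ ℝ)
    (h : L.IsHomogeneous 1) (x y : σ → ℝ) :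
    MvPolynomial.eval (fun k => x k + y k) L =
      MvPolynomial.eval x L + MvPolynomial.eval y L := by
  rw [homog_one_structure L h]
  simp [mul_add, Finset.sum_add_distrib]

lemma hom_factor {σ : Type*} (qp F L : MvPolynomial σ ℝ) (hq : qp.IsHomogeneous 2)
    (hF : F.IsHomogeneous 3) (hqn : qp ≠ 0) (hFL : F = qp * L) :
    F = qp * MvPolynomial.homogeneousComponent 1 L := by
  by_cases hL0 : L = 0
  · rw [hL0] at hFL
    rw [hFL, hL0]
    simp
  have hF3 : MvPolynomial.homogeneousComponent 3 F = F := by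
    rw [MvPolynomial.homogeneousComponent_of_mem
      ((MvPolynomial.mem_homogeneousSubmodule 3 F).mpr hF), if_pos rfl]
  have hsum := MvPolynomial.sum_homogeneousComponent L
  have hcalc : F = if 1 ∈ Finset.range (L.totalDegree + 1)
      then qp * MvPolynomial.homogeneousComponent 1 L else 0 := by
    calc F = MvPolynomial.homogeneousComponent 3 F := hF3.symm
    _ = MvPolynomial.homogeneousComponent 3
        (∑ i ∈ Finset.range (L.totalDegree + 1), qp * MvPolynomial.homogeneousComponent i L) := by
        rw [← Finset.mul_sum, hsum, ← hFL]
    _ = ∑ i ∈ Finset.range (L.totalDegree + 1),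
        MvPolynomial.homogeneousComponent 3 (qp * MvPolynomial.homogeneousComponent i L) := by
        rw [map_sum]
    _ = ∑ i ∈ Finset.range (L.totalDegree + 1),
        if i = 1 then qp * MvPolynomial.homogeneousComponent i L else 0 := by
        apply Finset.sum_congr rfl
        intro i _
        have hhom : (qp * MvPolynomial.homogeneousComponent i L).IsHomogeneous (2 + i) :=
          hq.mul (MvPolynomial.homogeneousComponent_isHomogeneous i L)
        rw [MvPolynomial.homogeneousComponent_of_mem
          ((MvPolynomial.mem_homogeneousSubmodule _ _).mpr hhom)]
        by_cases hi : i = 1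
        · subst hi; rw [if_pos rfl, if_pos (by omega)]
        · rw [if_neg hi, if_neg (by omega)]
    _ = if 1 ∈ Finset.range (L.totalDegree + 1)
        then qp * MvPolynomial.homogeneousComponent 1 L else 0 :=
        Finset.sum_ite_eq' _ 1 _
  by_cases hmem : 1 ∈ Finset.range (L.totalDegree + 1)
  · rwa [if_pos hmem] at hcalc
  · rw [if_neg hmem] at hcalc
    exfalso
    rw [hcalc] at hFL
    exact hL0 ((mul_eq_zero.mp hFL.symm).resolve_left hqn)

lemma cancel_qp {σ : Type*} (qp E : MvPolynomial σ ℝ) (hq : qp ≠ 0)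
    (h : ∀ x : σ → ℝ, MvPolynomial.eval x qp * MvPolynomial.eval x E = 0) : E = 0 := by
  have h2 : qp * E = 0 := by
    apply MvPolynomial.funext (q := 0)
    intro x
    simpa using h x
  exact (mul_eq_zero.mp h2).resolve_left hq

end Lin


theorem stmt13 (p q : ℕ) (hp : 1 ≤ p) (hq : 1 ≤ q) (hdim : 3 ≤ p + q)
    -- the quadratic form and bilinear form of signature (p,q)
    (Q : (Fin p ⊕ Fin q → ℝ) → ℝ)
    (hQ : ∀ v, Q v = ∑ i : Fin q, v (Sum.inr i) ^ 2 - ∑ i : Fin p, v (Sum.inl i) ^ 2)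
    (B : (Fin p ⊕ Fin q → ℝ) → (Fin p ⊕ Fin q → ℝ) → ℝ)
    (hB : ∀ v w, B v w = ∑ i : Fin q, v (Sum.inr i) * w (Sum.inr i) -
      ∑ i : Fin p, v (Sum.inl i) * w (Sum.inl i))
    -- 𝔖, given in coordinates by cubic homogeneous polynomials
    (S : (Fin p ⊕ Fin q → ℝ) → Matrix (Fin p ⊕ Fin q) (Fin p ⊕ Fin q) ℝ)
    (hpoly : ∀ i j, ∃ P : MvPolynomial (Fin p ⊕ Fin q) ℝ, P.IsHomogeneous 3 ∧
      ∀ x, S x i j = MvPolynomial.eval x P)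
    -- each 𝔖(x) is self-adjoint and 𝔖(x)x = 0
    (hsa : ∀ x y z, B ((S x).mulVec y) z = B y ((S x).mulVec z))
    (hxx : ∀ x, (S x).mulVec x = 0)
    -- 𝔖 vanishes on the null cone
    (hnull : ∀ x, Q x = 0 → S x = 0) :
    ∀ x, S x = 0 := by
  obtain ⟨q', rfl⟩ : ∃ q'', q = q'' + 1 := ⟨q - 1, by omega⟩
  choose P hPhom hPeval using hpoly
  have hqe : ∀ x, MvPolynomial.eval x (qpoly p (q' + 1)) = Q x := by
    intro x; rw [eval_qpoly, hQ]
  have hqn : qpoly p (q' + 1) ≠ 0 := by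
    intro h0
    set x0 : Fin p ⊕ Fin (q' + 1) → ℝ := Sum.elim (fun _ => 0) (fun _ => 1) with hx0
    have h1 := hqe x0
    rw [h0, hQ] at h1
    simp only [map_zero, hx0, Sum.elim_inl, Sum.elim_inr] at h1
    simp at h1
    have h2 : (0:ℝ) ≤ (q' : ℝ) := Nat.cast_nonneg q'
    linarith
  -- divisibility for each entry
  have hdvd : ∀ i j, ∃ L : MvPolynomial (Fin p ⊕ Fin (q' + 1)) ℝ,
      L.IsHomogeneous 1 ∧ P i j = qpoly p (q' + 1) * L := by
    intro i j
    obtain ⟨L0, hL0⟩ := key_dvd p q' hp (P i j) (fun x hx => by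
      rw [← hPeval i j x]
      have := hnull x (by rw [← hqe]; exact hx)
      rw [this]
      rfl)
    exact ⟨MvPolynomial.homogeneousComponent 1 L0,
      MvPolynomial.homogeneousComponent_isHomogeneous 1 L0,
      hom_factor _ _ _ (qpoly_isHomogeneous p (q' + 1)) (hPhom i j) hqn hL0⟩
  choose L hLhom hLfac using hdvd
  have hSf : ∀ x i j, S x i j = Q x * MvPolynomial.eval x (L i j) := by
    intro x i j
    rw [hPeval i j x, hLfac i j, map_mul, hqe]
  -- the sign vector
  set ε : Fin p ⊕ Fin (q' + 1) → ℝ := Sum.elim (fun _ => -1) (fun _ => 1) with hε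
  have hεne : ∀ k, ε k ≠ 0 := by
    rintro (j | i) <;> simp [hε]
  have hBe : ∀ v w, B v w = ∑ k : Fin p ⊕ Fin (q' + 1), ε k * v k * w k := by
    intro v w
    rw [hB, Fintype.sum_sum_type]
    simp only [hε, Sum.elim_inl, Sum.elim_inr, neg_one_mul, one_mul, neg_mul,
      Finset.sum_neg_distrib]
    ring
  -- delta vectors and dot sums
  set db : (Fin p ⊕ Fin (q' + 1)) → (Fin p ⊕ Fin (q' + 1)) → ℝ :=
    fun m0 k => if k = m0 then 1 else 0 with hdb
  have hdot : ∀ (g : Fin p ⊕ Fin (q' + 1) → ℝ) m0, (∑ m, g m * db m0 m) = g m0 := by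
    intro g m0
    rw [Finset.sum_congr rfl (fun m _ => by rw [hdb, mul_ite, mul_one, mul_zero])]
    rw [Finset.sum_ite_eq' Finset.univ m0 g, if_pos (Finset.mem_univ m0)]
  have hmv : ∀ (M : Matrix (Fin p ⊕ Fin (q' + 1)) (Fin p ⊕ Fin (q' + 1)) ℝ) m0 i,
      M.mulVec (db m0) i = M i m0 := by
    intro M m0 i
    simp only [Matrix.mulVec, dotProduct]
    exact hdot (fun j => M i j) m0
  -- entrywise self-adjointness of S
  have hsaE : ∀ x k l, ε l * S x l k = ε k * S x k l := by
    intro x k l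
    have h := hsa x (db k) (db l)
    rw [hBe, hBe] at h
    have h1 : (∑ m, ε m * (S x).mulVec (db k) m * db l m) = ε l * S x l k := by
      rw [hdot (fun m => ε m * (S x).mulVec (db k) m) l, hmv]
    have h2 : (∑ m, ε m * db k m * (S x).mulVec (db l) m) = ε k * S x k l := by
      have hterm : ∀ m, ε m * db k m * (S x).mulVec (db l) m
          = (ε m * (S x).mulVec (db l) m) * db k m := fun m => by ring
      rw [Finset.sum_congr rfl (fun m _ => hterm m),
        hdot (fun m => ε m * (S x).mulVec (db l) m) k, hmv]
    rw [h1, h2] at h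
    exact h
  -- transfer self-adjointness to L
  have hLsym : ∀ x k l, ε l * MvPolynomial.eval x (L l k) = ε k * MvPolynomial.eval x (L k l) := by
    intro x k l
    have hE : (MvPolynomial.C (ε l) * L l k - MvPolynomial.C (ε k) * L k l) = 0 := by
      apply cancel_qp (qpoly p (q' + 1)) _ hqn
      intro x'
      rw [map_sub, map_mul, map_mul, MvPolynomial.eval_C, MvPolynomial.eval_C, hqe]
      have := hsaE x' k l
      rw [hSf x' l k, hSf x' k l] at this
      ring_nf
      ring_nf at this
      linarith
    have := congrArg (MvPolynomial.eval x) hE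
    rw [map_sub, map_mul, map_mul, MvPolynomial.eval_C, MvPolynomial.eval_C] at this
    simp only [map_zero] at this
    linarith
  -- f(x) x = 0 at polynomial level
  have hfx : ∀ (x : Fin p ⊕ Fin (q' + 1) → ℝ) j,
      (∑ k, MvPolynomial.eval x (L j k) * x k) = 0 := by
    intro x j
    have hG : (∑ k, L j k * MvPolynomial.X k) = (0 : MvPolynomial (Fin p ⊕ Fin (q' + 1)) ℝ) := by
      apply cancel_qp (qpoly p (q' + 1)) _ hqn
      intro x'
      rw [map_sum, hqe]
      have h0 : (S x').mulVec x' j = 0 := congrFun (hxx x') j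
      simp only [Matrix.mulVec, dotProduct] at h0
      rw [Finset.sum_congr rfl (fun k _ => by rw [map_mul, MvPolynomial.eval_X])]
      rw [Finset.mul_sum]
      rw [← h0]
      apply Finset.sum_congr rfl
      intro k _
      rw [hSf x' j k]
      ring
    have := congrArg (MvPolynomial.eval x) hG
    rw [map_sum] at this
    simp only [map_zero] at this
    rw [← this]
    apply Finset.sum_congr rfl
    intro k _
    rw [map_mul, MvPolynomial.eval_X]
  -- polarization
  have hadd : ∀ j k (x y : Fin p ⊕ Fin (q' + 1) → ℝ),
      MvPolynomial.eval (fun m => x m + y m) (L j k) =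
        MvPolynomial.eval x (L j k) + MvPolynomial.eval y (L j k) :=
    fun j k x y => eval_homog_one_add (L j k) (hLhom j k) x y
  have hpol : ∀ (x y : Fin p ⊕ Fin (q' + 1) → ℝ) j,
      (∑ k, MvPolynomial.eval x (L j k) * y k) + (∑ k, MvPolynomial.eval y (L j k) * x k) = 0 := by
    intro x y j
    have h0 := hfx (fun m => x m + y m) j
    simp only [hadd, add_mul, mul_add, Finset.sum_add_distrib] at h0
    have hx0 := hfx x j
    have hy0 := hfx y j
    linarith
  -- the trilinear form
  set T : (Fin p ⊕ Fin (q' + 1) → ℝ) → (Fin p ⊕ Fin (q' + 1) → ℝ) →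
      (Fin p ⊕ Fin (q' + 1) → ℝ) → ℝ :=
    fun x y z => ∑ m, ε m * (∑ k, MvPolynomial.eval x (L m k) * y k) * z m with hTdef
  have tsym : ∀ x y z, T x y z = T x z y := by
    intro x y z
    simp only [hTdef]
    rw [Finset.sum_congr rfl (fun m _ => by rw [Finset.mul_sum, Finset.sum_mul])]
    rw [Finset.sum_congr rfl (fun m _ => Finset.sum_congr rfl (fun k _ => by
      rw [show ε m * (MvPolynomial.eval x (L m k) * y k) * z m
        = (ε m * MvPolynomial.eval x (L m k)) * y k * z m by ring, hLsym x k m]))]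
    rw [Finset.sum_comm]
    apply Finset.sum_congr rfl
    intro m _
    rw [Finset.mul_sum, Finset.sum_mul]
    apply Finset.sum_congr rfl
    intro k _
    ring
  have tanti : ∀ x y z, T x y z + T y x z = 0 := by
    intro x y z
    simp only [hTdef]
    rw [← Finset.sum_add_distrib]
    apply Finset.sum_eq_zero
    intro m _
    have h := hpol x y m
    have h2 : (∑ k, MvPolynomial.eval x (L m k) * y k)
        = -(∑ k, MvPolynomial.eval y (L m k) * x k) := by linarith
    rw [h2]
    ring
  have hT0 : ∀ x y z, T x y z = 0 := by
    intro x y z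
    have e1 := tsym x y z
    have e2 := tanti x z y
    have e3 := tsym z x y
    have e4 := tanti z y x
    have e5 := tsym y z x
    have e6 := tanti y x z
    linarith
  -- conclude
  intro x
  funext i j
  rw [hSf x i j]
  have h0 := hT0 x (db j) (db i)
  simp only [hTdef] at h0
  rw [hdot (fun m => ε m * (∑ k, MvPolynomial.eval x (L m k) * db j k)) i] at h0
  rw [hdot (fun k => MvPolynomial.eval x (L i k)) j] at h0
  have : MvPolynomial.eval x (L i j) = 0 := by
    rcases mul_eq_zero.mp h0 with h | h
    · exact absurd h (hεne i)
    · exact h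
  rw [this, mul_zero]
  rfl
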